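/- Let n ≥ 5 and let Z be a totally positive 5×n real matrix. Suppose v ∈ ℝ^n is such that for some integers i, j with 1 ≤ i, i + 1 < j, and j ≤ n − 2, the coordinates v_i, v_{i+1}, v_j, v_{j+1}, v_n are all positive and all other coordinates of v are zero; suppose v′ ∈ ℝ^n has the same form for some integers i′, j′ with 1 ≤ i′, i′ + 1 < j′ ≤ n − 2. If Zv and Zv′ span the same line in ℝ^5, then v and v′ span the same line in ℝ^n. -/

import Mathlib

/-- All maximal (`a × a`) minors of the `a × n` matrix `Z` are positive. -/
def MinorsPos {a n : ℕ} (Z : Matrix (Fin a) (Fin n) ℝ) : Prop :=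
  ∀ f : Fin a → Fin n, StrictMono f → 0 < (Z.submatrix id f).det

/-- The vector `v ∈ ℝ^n` has the `(1,n)`-BCFW shape determined by the 0-based
indices `i, j` with `i + 1 < j` and `j ≤ n - 3`: its coordinates at positions
`i, i+1, j, j+1` and at the last position `n-1` are positive, and all other
coordinates vanish. (In the paper's 1-based notation, `1 ≤ i`, `i + 1 < j ≤ n - 2`,
and the positive coordinates are `v_i, v_{i+1}, v_j, v_{j+1}, v_n`.) -/
def K1BCFWShape (n : ℕ) (i j : ℕ) (v : Fin n → ℝ) : Prop :=
  i + 1 < j ∧ j + 3 ≤ n ∧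
  (∀ l : Fin n, ((l : ℕ) = i ∨ (l : ℕ) = i + 1 ∨ (l : ℕ) = j ∨ (l : ℕ) = j + 1 ∨
      (l : ℕ) = n - 1) → 0 < v l) ∧
  (∀ l : Fin n, (l : ℕ) ≠ i → (l : ℕ) ≠ i + 1 → (l : ℕ) ≠ j → (l : ℕ) ≠ j + 1 →
      (l : ℕ) ≠ n - 1 → v l = 0)

set_option maxRecDepth 10000
set_option maxHeartbeats 2000000

open Matrix

private lemma strictMono_vec5 {n : ℕ} {q1 q2 q3 q4 q5 : Fin n} (h1 : q1 < q2) (h2 : q2 < q3)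
    (h3 : q3 < q4) (h4 : q4 < q5) : StrictMono ![q1,q2,q3,q4,q5] := by
  intro a b hab
  fin_cases a <;> fin_cases b <;> simp_all <;> omega

private def permt0 : Equiv.Perm (Fin 5) := ⟨![1,2,3,4,0], ![4,0,1,2,3], by decide, by decide⟩
private def permt1 : Equiv.Perm (Fin 5) := ⟨![0,2,3,4,1], ![0,4,1,2,3], by decide, by decide⟩
private def permt2 : Equiv.Perm (Fin 5) := ⟨![0,1,3,4,2], ![0,1,4,2,3], by decide, by decide⟩
private def permt3 : Equiv.Perm (Fin 5) := ⟨![0,1,2,4,3], ![0,1,2,4,3], by decide, by decide⟩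

private lemma sign_permt0 : Equiv.Perm.sign permt0 = 1 := by decide
private lemma sign_permt1 : Equiv.Perm.sign permt1 = -1 := by decide
private lemma sign_permt2 : Equiv.Perm.sign permt2 = 1 := by decide
private lemma sign_permt3 : Equiv.Perm.sign permt3 = -1 := by decide

/-- Sign-based kill lemma: if `Zw = 0` and there are four separators
`p1 < p2 < p3 < p4` such that off the separators the sign of `w` matches the
alternating zone pattern, and `w` is nonzero somewhere off the separators,
we get a contradiction. -/
private lemma killA {n : ℕ} (Z : Matrix (Fin 5) (Fin n) ℝ) (hZ : MinorsPos Z)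
    (w : Fin n → ℝ) (hw : Z.mulVec w = 0)
    (p1 p2 p3 p4 : Fin n) (h12 : p1 < p2) (h23 : p2 < p3) (h34 : p3 < p4)
    (σ : ℝ) (hσ : σ = 1 ∨ σ = -1)
    (hsign : ∀ l : Fin n, l ≠ p1 → l ≠ p2 → l ≠ p3 → l ≠ p4 →
      0 ≤ σ * (-1 : ℝ) ^ ((if p1 < l then 1 else 0) + (if p2 < l then 1 else 0)
        + (if p3 < l then 1 else 0) + (if p4 < l then 1 else 0) : ℕ) * w l)
    (l0 : Fin n) (h01 : l0 ≠ p1) (h02 : l0 ≠ p2) (h03 : l0 ≠ p3) (h04 : l0 ≠ p4)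
    (hw0 : w l0 ≠ 0) : False := by
  classical
  set col : Fin n → (Fin 5 → ℝ) := fun l s => Z s l with hcol
  set base : Matrix (Fin 5) (Fin 5) ℝ :=
    Matrix.of ![col p1, col p2, col p3, col p4, col p1] with hbase
  set d : Fin n → ℝ := fun l => (base.updateRow 4 (col l)).det with hd
  have hsum : ∀ (s : Finset (Fin n)),
      (base.updateRow 4 (∑ l ∈ s, w l • col l)).det = ∑ l ∈ s, w l * d l := by
    intro s
    induction s using Finset.induction with
    | empty =>
        simp only [Finset.sum_empty]
        exact Matrix.det_eq_zero_of_row_eq_zero 4 (by intro j; simp)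
    | insert a s hx ih =>
        rw [Finset.sum_insert hx, Finset.sum_insert hx, Matrix.det_updateRow_add,
          Matrix.det_updateRow_smul, ih]
  have hmv : Z.mulVec w = ∑ l, w l • col l := by
    funext s
    simp [Matrix.mulVec, dotProduct, Finset.sum_apply, mul_comm, hcol]
  have key : ∑ l, w l * d l = 0 := by
    rw [← hsum Finset.univ, ← hmv, hw]
    exact Matrix.det_eq_zero_of_row_eq_zero 4 (by intro j; simp)
  have hdetpos : ∀ q1 q2 q3 q4 q5 : Fin n, q1 < q2 → q2 < q3 → q3 < q4 → q4 < q5 →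
      0 < (Matrix.of ![col q1, col q2, col q3, col q4, col q5]).det := by
    intro q1 q2 q3 q4 q5 a1 a2 a3 a4
    have he : (Matrix.of ![col q1, col q2, col q3, col q4, col q5]).det
        = (Z.submatrix id ![q1,q2,q3,q4,q5]).det := by
      rw [← Matrix.det_transpose (Z.submatrix id ![q1,q2,q3,q4,q5])]
      congr 1
      funext u v
      fin_cases u <;> rfl
    rw [he]
    exact hZ _ (strictMono_vec5 a1 a2 a3 a4)
  have main : ∀ l : Fin n, l ≠ p1 → l ≠ p2 → l ≠ p3 → l ≠ p4 →
      0 ≤ σ * (w l * d l) ∧ (w l ≠ 0 → 0 < σ * (w l * d l)) := by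
    intro l e1 e2 e3 e4
    have hσne : σ ≠ 0 := by rcases hσ with h | h <;> rw [h] <;> norm_num
    have habs : ∀ (t : ℕ) (D : ℝ), 0 < D → d l = (-1 : ℝ) ^ t * D →
        ((if p1 < l then 1 else 0) + (if p2 < l then 1 else 0)
          + (if p3 < l then 1 else 0) + (if p4 < l then 1 else 0) : ℕ) = t →
        0 ≤ σ * (w l * d l) ∧ (w l ≠ 0 → 0 < σ * (w l * d l)) := by
      intro t D hD hdl ht
      have hs := hsign l e1 e2 e3 e4
      rw [ht] at hs
      constructor
      · have : σ * (w l * d l) = (σ * (-1 : ℝ) ^ t * w l) * D := by rw [hdl]; ring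
        rw [this]
        exact mul_nonneg hs hD.le
      · intro hwl
        have : σ * (w l * d l) = (σ * (-1 : ℝ) ^ t * w l) * D := by rw [hdl]; ring
        rw [this]
        have hne : σ * (-1 : ℝ) ^ t * w l ≠ 0 := by
          apply mul_ne_zero (mul_ne_zero hσne _) hwl
          positivity
        exact mul_pos (lt_of_le_of_ne hs (Ne.symm hne)) hD
    rcases lt_or_gt_of_ne e1 with hl1 | hl1
    · have heq : base.updateRow 4 (col l)
          = (Matrix.of ![col l, col p1, col p2, col p3, col p4]).submatrix permt0 id := by
        funext u v
        fin_cases u <;> simp [hbase, Matrix.updateRow_ne, Matrix.updateRow_self, permt0]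
      refine habs 0 _ (hdetpos l p1 p2 p3 p4 hl1 h12 h23 h34) ?_ ?_
      · show (base.updateRow 4 (col l)).det = _
        rw [heq, Matrix.det_permute, sign_permt0]
        norm_num
      · have : ¬ p1 < l := not_lt.2 hl1.le
        have h2 : ¬ p2 < l := not_lt.2 (hl1.trans h12).le
        have h3 : ¬ p3 < l := not_lt.2 ((hl1.trans h12).trans h23).le
        have h4 : ¬ p4 < l := not_lt.2 (((hl1.trans h12).trans h23).trans h34).le
        simp [this, h2, h3, h4]
    rcases lt_or_gt_of_ne e2 with hl2 | hl2
    · have heq : base.updateRow 4 (col l)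
          = (Matrix.of ![col p1, col l, col p2, col p3, col p4]).submatrix permt1 id := by
        funext u v
        fin_cases u <;> simp [hbase, Matrix.updateRow_ne, Matrix.updateRow_self, permt1]
      refine habs 1 _ (hdetpos p1 l p2 p3 p4 hl1 hl2 h23 h34) ?_ ?_
      · show (base.updateRow 4 (col l)).det = _
        rw [heq, Matrix.det_permute, sign_permt1]
        norm_num
      · have h2 : ¬ p2 < l := not_lt.2 hl2.le
        have h3 : ¬ p3 < l := not_lt.2 (hl2.trans h23).le
        have h4 : ¬ p4 < l := not_lt.2 ((hl2.trans h23).trans h34).le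
        simp [hl1, h2, h3, h4]
    rcases lt_or_gt_of_ne e3 with hl3 | hl3
    · have heq : base.updateRow 4 (col l)
          = (Matrix.of ![col p1, col p2, col l, col p3, col p4]).submatrix permt2 id := by
        funext u v
        fin_cases u <;> simp [hbase, Matrix.updateRow_ne, Matrix.updateRow_self, permt2]
      refine habs 2 _ (hdetpos p1 p2 l p3 p4 h12 hl2 hl3 h34) ?_ ?_
      · show (base.updateRow 4 (col l)).det = _
        rw [heq, Matrix.det_permute, sign_permt2]
        norm_num
      · have h1 : p1 < l := h12.trans hl2
        have h3 : ¬ p3 < l := not_lt.2 hl3.le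
        have h4 : ¬ p4 < l := not_lt.2 (hl3.trans h34).le
        simp [h1, hl2, h3, h4]
    rcases lt_or_gt_of_ne e4 with hl4 | hl4
    · have heq : base.updateRow 4 (col l)
          = (Matrix.of ![col p1, col p2, col p3, col l, col p4]).submatrix permt3 id := by
        funext u v
        fin_cases u <;> simp [hbase, Matrix.updateRow_ne, Matrix.updateRow_self, permt3]
      refine habs 3 _ (hdetpos p1 p2 p3 l p4 h12 h23 hl3 hl4) ?_ ?_
      · show (base.updateRow 4 (col l)).det = _
        rw [heq, Matrix.det_permute, sign_permt3]
        norm_num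
      · have h1 : p1 < l := h12.trans (h23.trans hl3)
        have h2 : p2 < l := h23.trans hl3
        have h4 : ¬ p4 < l := not_lt.2 hl4.le
        simp [h1, h2, hl3, h4]
    · have heq : base.updateRow 4 (col l)
          = Matrix.of ![col p1, col p2, col p3, col p4, col l] := by
        funext u v
        fin_cases u <;> simp [hbase, Matrix.updateRow_ne, Matrix.updateRow_self]
      refine habs 4 _ (hdetpos p1 p2 p3 p4 l h12 h23 h34 hl4) ?_ ?_
      · show (base.updateRow 4 (col l)).det = _
        rw [heq]
        norm_num
      · have h1 : p1 < l := h12.trans (h23.trans (h34.trans hl4))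
        have h2 : p2 < l := h23.trans (h34.trans hl4)
        have h3 : p3 < l := h34.trans hl4
        simp [h1, h2, h3, hl4]
  have dzero : ∀ l : Fin n, (l = p1 ∨ l = p2 ∨ l = p3 ∨ l = p4) → d l = 0 := by
    intro l hl
    rcases hl with h | h | h | h
    · subst h
      exact Matrix.det_zero_of_row_eq (i := 0) (j := 4) (by decide) rfl
    · subst h
      exact Matrix.det_zero_of_row_eq (i := 1) (j := 4) (by decide) rfl
    · subst h
      exact Matrix.det_zero_of_row_eq (i := 2) (j := 4) (by decide) rfl
    · subst h
      exact Matrix.det_zero_of_row_eq (i := 3) (j := 4) (by decide) rfl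
  have hpos : (0:ℝ) < ∑ l, σ * (w l * d l) := by
    apply Finset.sum_pos'
    · intro l _
      by_cases hl : l = p1 ∨ l = p2 ∨ l = p3 ∨ l = p4
      · rw [dzero l hl]
        simp
      · push_neg at hl
        exact (main l hl.1 hl.2.1 hl.2.2.1 hl.2.2.2).1
    · exact ⟨l0, Finset.mem_univ _, (main l0 h01 h02 h03 h04).2 hw0⟩
  rw [← Finset.mul_sum, key, mul_zero] at hpos
  exact lt_irrefl 0 hpos

/-- A kernel vector supported on at most five increasing positions vanishes. -/
private lemma killC {n : ℕ} (Z : Matrix (Fin 5) (Fin n) ℝ) (hZ : MinorsPos Z)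
    (w : Fin n → ℝ) (hw : Z.mulVec w = 0)
    (q1 q2 q3 q4 q5 : Fin n) (a1 : q1 < q2) (a2 : q2 < q3) (a3 : q3 < q4) (a4 : q4 < q5)
    (hsupp : ∀ l : Fin n, l ≠ q1 → l ≠ q2 → l ≠ q3 → l ≠ q4 → l ≠ q5 → w l = 0) :
    w = 0 := by
  classical
  set f : Fin 5 → Fin n := ![q1,q2,q3,q4,q5] with hf
  have hmono : StrictMono f := strictMono_vec5 a1 a2 a3 a4
  have hinj : Function.Injective f := hmono.injective
  set M : Matrix (Fin 5) (Fin 5) ℝ := Z.submatrix id f with hM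
  have hdet : M.det ≠ 0 := ne_of_gt (hZ f hmono)
  have hmv : M.mulVec (w ∘ f) = 0 := by
    funext s
    have h1 : M.mulVec (w ∘ f) s = ∑ t, Z s (f t) * w (f t) := by
      simp [Matrix.mulVec, dotProduct, hM]
    rw [h1]
    have h2 : ∑ t, Z s (f t) * w (f t) = ∑ l ∈ Finset.univ.image f, Z s l * w l := by
      rw [Finset.sum_image (fun a _ b _ h => hinj h)]
    rw [h2]
    have h3 : ∑ l ∈ Finset.univ.image f, Z s l * w l = ∑ l, Z s l * w l := by
      apply Finset.sum_subset (Finset.subset_univ _)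
      intro l _ hl
      have hz : w l = 0 := by
        apply hsupp <;>
        · intro he
          apply hl
          rw [he]
          refine Finset.mem_image.2 ?_
          first
            | exact ⟨0, Finset.mem_univ _, rfl⟩
            | exact ⟨1, Finset.mem_univ _, rfl⟩
            | exact ⟨2, Finset.mem_univ _, rfl⟩
            | exact ⟨3, Finset.mem_univ _, rfl⟩
            | exact ⟨4, Finset.mem_univ _, rfl⟩
      rw [hz, mul_zero]
    rw [h3]
    have h4 : Z.mulVec w s = 0 := by rw [hw]; rfl
    simpa [Matrix.mulVec, dotProduct] using h4
  have hx : w ∘ f = 0 := Matrix.eq_zero_of_mulVec_eq_zero hdet hmv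
  funext l
  by_cases h1 : l = q1
  · subst h1; exact congrFun hx 0
  by_cases h2 : l = q2
  · subst h2; exact congrFun hx 1
  by_cases h3 : l = q3
  · subst h3; exact congrFun hx 2
  by_cases h4 : l = q4
  · subst h4; exact congrFun hx 3
  by_cases h5 : l = q5
  · subst h5; exact congrFun hx 4
  · exact hsupp l h1 h2 h3 h4 h5

/-- No kernel vector has all coordinates from index `4` on nonnegative with one of
them nonzero. -/
private lemma killNonneg {n : ℕ} (hn : 5 ≤ n) (Z : Matrix (Fin 5) (Fin n) ℝ)
    (hZ : MinorsPos Z) (u : Fin n → ℝ) (hu : Z.mulVec u = 0)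
    (hnn : ∀ l : Fin n, 4 ≤ (l : ℕ) → 0 ≤ u l)
    (l0 : Fin n) (hl0 : 4 ≤ (l0 : ℕ)) (hl0ne : u l0 ≠ 0) : False := by
  have h0 : (0:ℕ) < n := by omega
  have h1 : (1:ℕ) < n := by omega
  have h2 : (2:ℕ) < n := by omega
  have h3 : (3:ℕ) < n := by omega
  refine killA Z hZ u hu ⟨0, h0⟩ ⟨1, h1⟩ ⟨2, h2⟩ ⟨3, h3⟩
    (by simp [Fin.lt_def]) (by simp [Fin.lt_def]) (by simp [Fin.lt_def])
    1 (Or.inl rfl) ?_ l0 ?_ ?_ ?_ ?_ hl0ne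
  · intro l e1 e2 e3 e4
    have hv0 : (l : ℕ) ≠ 0 := fun hh => e1 (Fin.ext hh)
    have hv1 : (l : ℕ) ≠ 1 := fun hh => e2 (Fin.ext hh)
    have hv2 : (l : ℕ) ≠ 2 := fun hh => e3 (Fin.ext hh)
    have hv3 : (l : ℕ) ≠ 3 := fun hh => e4 (Fin.ext hh)
    have hge : 4 ≤ (l : ℕ) := by omega
    rw [if_pos (by rw [Fin.lt_def]; simpa using (by omega : 0 < (l:ℕ))),
      if_pos (by rw [Fin.lt_def]; simpa using (by omega : 1 < (l:ℕ))),
      if_pos (by rw [Fin.lt_def]; simpa using (by omega : 2 < (l:ℕ))),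
      if_pos (by rw [Fin.lt_def]; simpa using (by omega : 3 < (l:ℕ)))]
    norm_num
    exact hnn l hge
  · intro hh; rw [hh] at hl0; simp at hl0
  · intro hh; rw [hh] at hl0; simp at hl0
  · intro hh; rw [hh] at hl0; simp at hl0
  · intro hh; rw [hh] at hl0; simp at hl0
private lemma sepB (n i j i' j' : ℕ) (hij : i + 1 < j) (hjn : j + 3 ≤ n)
    (hij' : i' + 1 < j') (hjn' : j' + 3 ≤ n) (hne : ¬(i = i' ∧ j = j')) :
    ∃ a b c e : ℕ,
      (a < b ∧ b < c ∧ c + 1 < n) ∧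
      (∀ l : ℕ, (l = i ∨ l = i + 1 ∨ l = j ∨ l = j + 1) →
        (l = i' ∨ l = i' + 1 ∨ l = j' ∨ l = j' + 1) → (l = a ∨ l = b ∨ l = c)) ∧
      (∀ l : ℕ, (l = i ∨ l = i + 1 ∨ l = j ∨ l = j + 1) →
        ¬(l = i' ∨ l = i' + 1 ∨ l = j' ∨ l = j' + 1) → l ≠ a → l ≠ b → l ≠ c →
        ((if a < l then 1 else 0) + (if b < l then 1 else 0) + (if c < l then 1 else 0) + e) % 2 = 0) ∧
      (∀ l : ℕ, (l = i' ∨ l = i' + 1 ∨ l = j' ∨ l = j' + 1) →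
        ¬(l = i ∨ l = i + 1 ∨ l = j ∨ l = j + 1) → l ≠ a → l ≠ b → l ≠ c →
        ((if a < l then 1 else 0) + (if b < l then 1 else 0) + (if c < l then 1 else 0) + e) % 2 = 1) ∧
      (∃ l0 : ℕ,
        (((l0 = i ∨ l0 = i + 1 ∨ l0 = j ∨ l0 = j + 1) ∧
            ¬(l0 = i' ∨ l0 = i' + 1 ∨ l0 = j' ∨ l0 = j' + 1)) ∨
         ((l0 = i' ∨ l0 = i' + 1 ∨ l0 = j' ∨ l0 = j' + 1) ∧
            ¬(l0 = i ∨ l0 = i + 1 ∨ l0 = j ∨ l0 = j + 1))) ∧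
        l0 ≠ a ∧ l0 ≠ b ∧ l0 ≠ c) := by
  have Hi : (i' + 1 < i) ∨ (i' + 1 = i) ∨ (i' = i) ∨ (i' = i + 1 ∧ i + 2 < j) ∨ (i' = i + 1 ∧ i + 2 = j) ∨ (i + 1 < i' ∧ i' + 1 < j) ∨ (i + 1 < i' ∧ i' + 1 = j) ∨ (i' = j) ∨ (i' = j + 1) ∨ (j + 1 < i') := by omega
  have Hj : (j' + 1 < i) ∨ (j' + 1 = i) ∨ (j' = i) ∨ (j' = i + 1 ∧ i + 2 < j) ∨ (j' = i + 1 ∧ i + 2 = j) ∨ (i + 1 < j' ∧ j' + 1 < j) ∨ (i + 1 < j' ∧ j' + 1 = j) ∨ (j' = j) ∨ (j' = j + 1) ∨ (j + 1 < j') := by omega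
  obtain c1|c1|c1|c1|c1|c1|c1|c1|c1|c1 := Hi
  · obtain c2|c2|c2|c2|c2|c2|c2|c2|c2|c2 := Hj
    · refine ⟨i, i + 1, j, 1, ⟨by omega, by omega, by omega⟩, ?_, ?_, ?_,
        ⟨j + 1, by omega, by omega, by omega, by omega⟩⟩
      · intro l h1 h2
        omega
      · intro l h1 h2 h3 h4 h5
        split_ifs <;> omega
      · intro l h1 h2 h3 h4 h5
        split_ifs <;> omega
    · refine ⟨i, i + 1, j, 1, ⟨by omega, by omega, by omega⟩, ?_, ?_, ?_,
        ⟨j + 1, by omega, by omega, by omega, by omega⟩⟩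
      · intro l h1 h2
        omega
      · intro l h1 h2 h3 h4 h5
        split_ifs <;> omega
      · intro l h1 h2 h3 h4 h5
        split_ifs <;> omega
    · refine ⟨i, i + 1, j, 1, ⟨by omega, by omega, by omega⟩, ?_, ?_, ?_,
        ⟨j + 1, by omega, by omega, by omega, by omega⟩⟩
      · intro l h1 h2
        omega
      · intro l h1 h2 h3 h4 h5
        split_ifs <;> omega
      · intro l h1 h2 h3 h4 h5
        split_ifs <;> omega
    · refine ⟨i, i + 1, j, 1, ⟨by omega, by omega, by omega⟩, ?_, ?_, ?_,
        ⟨j + 1, by omega, by omega, by omega, by omega⟩⟩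
      · intro l h1 h2
        omega
      · intro l h1 h2 h3 h4 h5
        split_ifs <;> omega
      · intro l h1 h2 h3 h4 h5
        split_ifs <;> omega
    · refine ⟨i, i + 1, j, 1, ⟨by omega, by omega, by omega⟩, ?_, ?_, ?_,
        ⟨j + 1, by omega, by omega, by omega, by omega⟩⟩
      · intro l h1 h2
        omega
      · intro l h1 h2 h3 h4 h5
        split_ifs <;> omega
      · intro l h1 h2 h3 h4 h5
        split_ifs <;> omega
    · refine ⟨i, i + 1, j, 1, ⟨by omega, by omega, by omega⟩, ?_, ?_, ?_,
        ⟨j + 1, by omega, by omega, by omega, by omega⟩⟩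
      · intro l h1 h2
        omega
      · intro l h1 h2 h3 h4 h5
        split_ifs <;> omega
      · intro l h1 h2 h3 h4 h5
        split_ifs <;> omega
    · refine ⟨i, i + 1, j, 1, ⟨by omega, by omega, by omega⟩, ?_, ?_, ?_,
        ⟨j + 1, by omega, by omega, by omega, by omega⟩⟩
      · intro l h1 h2
        omega
      · intro l h1 h2 h3 h4 h5
        split_ifs <;> omega
      · intro l h1 h2 h3 h4 h5
        split_ifs <;> omega
    · refine ⟨i, j, j + 1, 1, ⟨by omega, by omega, by omega⟩, ?_, ?_, ?_,
        ⟨i + 1, by omega, by omega, by omega, by omega⟩⟩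
      · intro l h1 h2
        omega
      · intro l h1 h2 h3 h4 h5
        split_ifs <;> omega
      · intro l h1 h2 h3 h4 h5
        split_ifs <;> omega
    · refine ⟨i, j + 1, j' + 1, 1, ⟨by omega, by omega, by omega⟩, ?_, ?_, ?_,
        ⟨i + 1, by omega, by omega, by omega, by omega⟩⟩
      · intro l h1 h2
        omega
      · intro l h1 h2 h3 h4 h5
        split_ifs <;> omega
      · intro l h1 h2 h3 h4 h5
        split_ifs <;> omega
    · refine ⟨i, j + 1, j' + 1, 1, ⟨by omega, by omega, by omega⟩, ?_, ?_, ?_,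
        ⟨i + 1, by omega, by omega, by omega, by omega⟩⟩
      · intro l h1 h2
        omega
      · intro l h1 h2 h3 h4 h5
        split_ifs <;> omega
      · intro l h1 h2 h3 h4 h5
        split_ifs <;> omega
  · obtain c2|c2|c2|c2|c2|c2|c2|c2|c2|c2 := Hj
    · exfalso; omega
    · exfalso; omega
    · exfalso; omega
    · refine ⟨i, i + 1, j, 1, ⟨by omega, by omega, by omega⟩, ?_, ?_, ?_,
        ⟨j + 1, by omega, by omega, by omega, by omega⟩⟩
      · intro l h1 h2
        omega
      · intro l h1 h2 h3 h4 h5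
        split_ifs <;> omega
      · intro l h1 h2 h3 h4 h5
        split_ifs <;> omega
    · refine ⟨i, i + 1, j, 1, ⟨by omega, by omega, by omega⟩, ?_, ?_, ?_,
        ⟨j + 1, by omega, by omega, by omega, by omega⟩⟩
      · intro l h1 h2
        omega
      · intro l h1 h2 h3 h4 h5
        split_ifs <;> omega
      · intro l h1 h2 h3 h4 h5
        split_ifs <;> omega
    · refine ⟨i, i + 1, j, 1, ⟨by omega, by omega, by omega⟩, ?_, ?_, ?_,
        ⟨j + 1, by omega, by omega, by omega, by omega⟩⟩
      · intro l h1 h2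
        omega
      · intro l h1 h2 h3 h4 h5
        split_ifs <;> omega
      · intro l h1 h2 h3 h4 h5
        split_ifs <;> omega
    · refine ⟨i, i + 1, j, 1, ⟨by omega, by omega, by omega⟩, ?_, ?_, ?_,
        ⟨j + 1, by omega, by omega, by omega, by omega⟩⟩
      · intro l h1 h2
        omega
      · intro l h1 h2 h3 h4 h5
        split_ifs <;> omega
      · intro l h1 h2 h3 h4 h5
        split_ifs <;> omega
    · refine ⟨i, j, j + 1, 1, ⟨by omega, by omega, by omega⟩, ?_, ?_, ?_,
        ⟨i + 1, by omega, by omega, by omega, by omega⟩⟩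
      · intro l h1 h2
        omega
      · intro l h1 h2 h3 h4 h5
        split_ifs <;> omega
      · intro l h1 h2 h3 h4 h5
        split_ifs <;> omega
    · refine ⟨i, j + 1, j' + 1, 1, ⟨by omega, by omega, by omega⟩, ?_, ?_, ?_,
        ⟨i + 1, by omega, by omega, by omega, by omega⟩⟩
      · intro l h1 h2
        omega
      · intro l h1 h2 h3 h4 h5
        split_ifs <;> omega
      · intro l h1 h2 h3 h4 h5
        split_ifs <;> omega
    · refine ⟨i, j + 1, j' + 1, 1, ⟨by omega, by omega, by omega⟩, ?_, ?_, ?_,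
        ⟨i + 1, by omega, by omega, by omega, by omega⟩⟩
      · intro l h1 h2
        omega
      · intro l h1 h2 h3 h4 h5
        split_ifs <;> omega
      · intro l h1 h2 h3 h4 h5
        split_ifs <;> omega
  · obtain c2|c2|c2|c2|c2|c2|c2|c2|c2|c2 := Hj
    · exfalso; omega
    · exfalso; omega
    · exfalso; omega
    · exfalso; omega
    · exfalso; omega
    · refine ⟨i, i + 1, j, 1, ⟨by omega, by omega, by omega⟩, ?_, ?_, ?_,
        ⟨j + 1, by omega, by omega, by omega, by omega⟩⟩
      · intro l h1 h2
        omega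
      · intro l h1 h2 h3 h4 h5
        split_ifs <;> omega
      · intro l h1 h2 h3 h4 h5
        split_ifs <;> omega
    · refine ⟨i, i + 1, j, 1, ⟨by omega, by omega, by omega⟩, ?_, ?_, ?_,
        ⟨j + 1, by omega, by omega, by omega, by omega⟩⟩
      · intro l h1 h2
        omega
      · intro l h1 h2 h3 h4 h5
        split_ifs <;> omega
      · intro l h1 h2 h3 h4 h5
        split_ifs <;> omega
    · exfalso; omega
    · refine ⟨i, i + 1, j + 1, 0, ⟨by omega, by omega, by omega⟩, ?_, ?_, ?_,
        ⟨j, by omega, by omega, by omega, by omega⟩⟩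
      · intro l h1 h2
        omega
      · intro l h1 h2 h3 h4 h5
        split_ifs <;> omega
      · intro l h1 h2 h3 h4 h5
        split_ifs <;> omega
    · refine ⟨i, i + 1, j + 1, 0, ⟨by omega, by omega, by omega⟩, ?_, ?_, ?_,
        ⟨j, by omega, by omega, by omega, by omega⟩⟩
      · intro l h1 h2
        omega
      · intro l h1 h2 h3 h4 h5
        split_ifs <;> omega
      · intro l h1 h2 h3 h4 h5
        split_ifs <;> omega
  · obtain c2|c2|c2|c2|c2|c2|c2|c2|c2|c2 := Hj
    · exfalso; omega
    · exfalso; omega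
    · exfalso; omega
    · exfalso; omega
    · exfalso; omega
    · refine ⟨i, i + 1, j, 1, ⟨by omega, by omega, by omega⟩, ?_, ?_, ?_,
        ⟨j + 1, by omega, by omega, by omega, by omega⟩⟩
      · intro l h1 h2
        omega
      · intro l h1 h2 h3 h4 h5
        split_ifs <;> omega
      · intro l h1 h2 h3 h4 h5
        split_ifs <;> omega
    · refine ⟨i, i + 1, j, 1, ⟨by omega, by omega, by omega⟩, ?_, ?_, ?_,
        ⟨j + 1, by omega, by omega, by omega, by omega⟩⟩
      · intro l h1 h2
        omega
      · intro l h1 h2 h3 h4 h5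
        split_ifs <;> omega
      · intro l h1 h2 h3 h4 h5
        split_ifs <;> omega
    · refine ⟨i + 1, j, j + 1, 0, ⟨by omega, by omega, by omega⟩, ?_, ?_, ?_,
        ⟨i, by omega, by omega, by omega, by omega⟩⟩
      · intro l h1 h2
        omega
      · intro l h1 h2 h3 h4 h5
        split_ifs <;> omega
      · intro l h1 h2 h3 h4 h5
        split_ifs <;> omega
    · refine ⟨i + 1, j, j + 1, 0, ⟨by omega, by omega, by omega⟩, ?_, ?_, ?_,
        ⟨i, by omega, by omega, by omega, by omega⟩⟩
      · intro l h1 h2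
        omega
      · intro l h1 h2 h3 h4 h5
        split_ifs <;> omega
      · intro l h1 h2 h3 h4 h5
        split_ifs <;> omega
    · refine ⟨i + 1, j, j + 1, 0, ⟨by omega, by omega, by omega⟩, ?_, ?_, ?_,
        ⟨i, by omega, by omega, by omega, by omega⟩⟩
      · intro l h1 h2
        omega
      · intro l h1 h2 h3 h4 h5
        split_ifs <;> omega
      · intro l h1 h2 h3 h4 h5
        split_ifs <;> omega
  · obtain c2|c2|c2|c2|c2|c2|c2|c2|c2|c2 := Hj
    · exfalso; omega
    · exfalso; omega
    · exfalso; omega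
    · exfalso; omega
    · exfalso; omega
    · exfalso; omega
    · exfalso; omega
    · exfalso; omega
    · refine ⟨i + 1, j, j + 1, 0, ⟨by omega, by omega, by omega⟩, ?_, ?_, ?_,
        ⟨i, by omega, by omega, by omega, by omega⟩⟩
      · intro l h1 h2
        omega
      · intro l h1 h2 h3 h4 h5
        split_ifs <;> omega
      · intro l h1 h2 h3 h4 h5
        split_ifs <;> omega
    · refine ⟨i + 1, j, j + 1, 0, ⟨by omega, by omega, by omega⟩, ?_, ?_, ?_,
        ⟨i, by omega, by omega, by omega, by omega⟩⟩
      · intro l h1 h2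
        omega
      · intro l h1 h2 h3 h4 h5
        split_ifs <;> omega
      · intro l h1 h2 h3 h4 h5
        split_ifs <;> omega
  · obtain c2|c2|c2|c2|c2|c2|c2|c2|c2|c2 := Hj
    · exfalso; omega
    · exfalso; omega
    · exfalso; omega
    · exfalso; omega
    · exfalso; omega
    · refine ⟨i, i + 1, j, 1, ⟨by omega, by omega, by omega⟩, ?_, ?_, ?_,
        ⟨j + 1, by omega, by omega, by omega, by omega⟩⟩
      · intro l h1 h2
        omega
      · intro l h1 h2 h3 h4 h5
        split_ifs <;> omega
      · intro l h1 h2 h3 h4 h5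
        split_ifs <;> omega
    · refine ⟨i, i + 1, j, 1, ⟨by omega, by omega, by omega⟩, ?_, ?_, ?_,
        ⟨j + 1, by omega, by omega, by omega, by omega⟩⟩
      · intro l h1 h2
        omega
      · intro l h1 h2 h3 h4 h5
        split_ifs <;> omega
      · intro l h1 h2 h3 h4 h5
        split_ifs <;> omega
    · refine ⟨i + 1, j, j + 1, 0, ⟨by omega, by omega, by omega⟩, ?_, ?_, ?_,
        ⟨i, by omega, by omega, by omega, by omega⟩⟩
      · intro l h1 h2
        omega
      · intro l h1 h2 h3 h4 h5
        split_ifs <;> omega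
      · intro l h1 h2 h3 h4 h5
        split_ifs <;> omega
    · refine ⟨i + 1, j, j + 1, 0, ⟨by omega, by omega, by omega⟩, ?_, ?_, ?_,
        ⟨i, by omega, by omega, by omega, by omega⟩⟩
      · intro l h1 h2
        omega
      · intro l h1 h2 h3 h4 h5
        split_ifs <;> omega
      · intro l h1 h2 h3 h4 h5
        split_ifs <;> omega
    · refine ⟨i + 1, j, j + 1, 0, ⟨by omega, by omega, by omega⟩, ?_, ?_, ?_,
        ⟨i, by omega, by omega, by omega, by omega⟩⟩
      · intro l h1 h2
        omega
      · intro l h1 h2 h3 h4 h5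
        split_ifs <;> omega
      · intro l h1 h2 h3 h4 h5
        split_ifs <;> omega
  · obtain c2|c2|c2|c2|c2|c2|c2|c2|c2|c2 := Hj
    · exfalso; omega
    · exfalso; omega
    · exfalso; omega
    · exfalso; omega
    · exfalso; omega
    · exfalso; omega
    · exfalso; omega
    · exfalso; omega
    · refine ⟨i + 1, j, j + 1, 0, ⟨by omega, by omega, by omega⟩, ?_, ?_, ?_,
        ⟨i, by omega, by omega, by omega, by omega⟩⟩
      · intro l h1 h2
        omega
      · intro l h1 h2 h3 h4 h5
        split_ifs <;> omega
      · intro l h1 h2 h3 h4 h5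
        split_ifs <;> omega
    · refine ⟨i + 1, j, j + 1, 0, ⟨by omega, by omega, by omega⟩, ?_, ?_, ?_,
        ⟨i, by omega, by omega, by omega, by omega⟩⟩
      · intro l h1 h2
        omega
      · intro l h1 h2 h3 h4 h5
        split_ifs <;> omega
      · intro l h1 h2 h3 h4 h5
        split_ifs <;> omega
  · obtain c2|c2|c2|c2|c2|c2|c2|c2|c2|c2 := Hj
    · exfalso; omega
    · exfalso; omega
    · exfalso; omega
    · exfalso; omega
    · exfalso; omega
    · exfalso; omega
    · exfalso; omega
    · exfalso; omega
    · exfalso; omega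
    · refine ⟨i + 1, j, j + 1, 0, ⟨by omega, by omega, by omega⟩, ?_, ?_, ?_,
        ⟨i, by omega, by omega, by omega, by omega⟩⟩
      · intro l h1 h2
        omega
      · intro l h1 h2 h3 h4 h5
        split_ifs <;> omega
      · intro l h1 h2 h3 h4 h5
        split_ifs <;> omega
  · obtain c2|c2|c2|c2|c2|c2|c2|c2|c2|c2 := Hj
    · exfalso; omega
    · exfalso; omega
    · exfalso; omega
    · exfalso; omega
    · exfalso; omega
    · exfalso; omega
    · exfalso; omega
    · exfalso; omega
    · exfalso; omega
    · refine ⟨i, i + 1, j + 1, 0, ⟨by omega, by omega, by omega⟩, ?_, ?_, ?_,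
        ⟨j, by omega, by omega, by omega, by omega⟩⟩
      · intro l h1 h2
        omega
      · intro l h1 h2 h3 h4 h5
        split_ifs <;> omega
      · intro l h1 h2 h3 h4 h5
        split_ifs <;> omega
  · obtain c2|c2|c2|c2|c2|c2|c2|c2|c2|c2 := Hj
    · exfalso; omega
    · exfalso; omega
    · exfalso; omega
    · exfalso; omega
    · exfalso; omega
    · exfalso; omega
    · exfalso; omega
    · exfalso; omega
    · exfalso; omega
    · refine ⟨i, i + 1, j + 1, 0, ⟨by omega, by omega, by omega⟩, ?_, ?_, ?_,
        ⟨j, by omega, by omega, by omega, by omega⟩⟩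
      · intro l h1 h2
        omega
      · intro l h1 h2 h3 h4 h5
        split_ifs <;> omega
      · intro l h1 h2 h3 h4 h5
        split_ifs <;> omega

private lemma ite_mk_lt {n a : ℕ} (ha : a < n) (l : Fin n) :
    (if (⟨a, ha⟩ : Fin n) < l then (1:ℕ) else 0) = if a < (l:ℕ) then 1 else 0 := by
  by_cases h : a < (l:ℕ)
  · simp [Fin.lt_def, h]
  · simp [Fin.lt_def, h]

private lemma ite_mk_last {n : ℕ} (hnn : n - 1 < n) (l : Fin n) :
    (if (⟨n - 1, hnn⟩ : Fin n) < l then (1:ℕ) else 0) = 0 := by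
  have h : ¬ ((⟨n - 1, hnn⟩ : Fin n) < l) := by
    intro hlt
    have h2 : n - 1 < (l : ℕ) := hlt
    have h3 := l.isLt
    omega
  simp [h]

private lemma helperSign (t e : ℕ) (he : (t + e) % 2 = 0) :
    (if e % 2 = 0 then (1:ℝ) else -1) * (-1 : ℝ) ^ t = 1 := by
  rcases Nat.even_or_odd t with ht | ht
  · have ht2 := Nat.even_iff.1 ht
    rw [ht.neg_one_pow]
    have h3 : e % 2 = 0 := by omega
    rw [if_pos h3, mul_one]
  · have ht2 := Nat.odd_iff.1 ht
    rw [ht.neg_one_pow]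
    have h3 : ¬ e % 2 = 0 := by omega
    rw [if_neg h3]
    norm_num

private lemma helperSign' (t e : ℕ) (he : (t + e) % 2 = 1) :
    (if e % 2 = 0 then (1:ℝ) else -1) * (-1 : ℝ) ^ t = -1 := by
  rcases Nat.even_or_odd t with ht | ht
  · have ht2 := Nat.even_iff.1 ht
    rw [ht.neg_one_pow]
    have h3 : ¬ e % 2 = 0 := by omega
    rw [if_neg h3, mul_one]
  · have ht2 := Nat.odd_iff.1 ht
    rw [ht.neg_one_pow]
    have h3 : e % 2 = 0 := by omega
    rw [if_pos h3]
    norm_num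

/-- Bridge lemma: a kernel vector which is positive on the pure part of the
support of `v`, negative on the pure part of the support of `v'`, and zero
outside both supports (except possibly at `n-1`) yields a contradiction when
the labels differ. -/
private lemma killB {n : ℕ} (hn : 5 ≤ n) (Z : Matrix (Fin 5) (Fin n) ℝ) (hZ : MinorsPos Z)
    (i j i' j' : ℕ) (hij : i + 1 < j) (hjn : j + 3 ≤ n)
    (hij' : i' + 1 < j') (hjn' : j' + 3 ≤ n) (hne : ¬(i = i' ∧ j = j'))
    (w : Fin n → ℝ) (hker : Z.mulVec w = 0)
    (hwpos : ∀ l : Fin n, ((l:ℕ) = i ∨ (l:ℕ) = i + 1 ∨ (l:ℕ) = j ∨ (l:ℕ) = j + 1) →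
      ¬((l:ℕ) = i' ∨ (l:ℕ) = i' + 1 ∨ (l:ℕ) = j' ∨ (l:ℕ) = j' + 1) → 0 < w l)
    (hwneg : ∀ l : Fin n, ((l:ℕ) = i' ∨ (l:ℕ) = i' + 1 ∨ (l:ℕ) = j' ∨ (l:ℕ) = j' + 1) →
      ¬((l:ℕ) = i ∨ (l:ℕ) = i + 1 ∨ (l:ℕ) = j ∨ (l:ℕ) = j + 1) → w l < 0)
    (hwzero : ∀ l : Fin n, ¬((l:ℕ) = i ∨ (l:ℕ) = i + 1 ∨ (l:ℕ) = j ∨ (l:ℕ) = j + 1) →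
      ¬((l:ℕ) = i' ∨ (l:ℕ) = i' + 1 ∨ (l:ℕ) = j' ∨ (l:ℕ) = j' + 1) → (l:ℕ) ≠ n - 1 →
      w l = 0) :
    False := by
  obtain ⟨a, b, cc, e, ⟨hab, hbc, hcn⟩, hshared, hP, hN, l0, hl0pure, hl0a, hl0b, hl0c⟩ :=
    sepB n i j i' j' hij hjn hij' hjn' hne
  have han : a < n := by omega
  have hbn : b < n := by omega
  have hccn : cc < n := by omega
  have hnn : n - 1 < n := by omega
  have hl0n : l0 < n := by
    rcases hl0pure with ⟨hh, _⟩ | ⟨hh, _⟩ <;> omega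
  refine killA Z hZ w hker ⟨a, han⟩ ⟨b, hbn⟩ ⟨cc, hccn⟩ ⟨n - 1, hnn⟩
    (Fin.mk_lt_mk.2 hab) (Fin.mk_lt_mk.2 hbc) (Fin.mk_lt_mk.2 (by omega))
    (if e % 2 = 0 then (1:ℝ) else -1) (by by_cases h : e % 2 = 0 <;> simp [h])
    ?_ ⟨l0, hl0n⟩ ?_ ?_ ?_ ?_ ?_
  · intro l e1 e2 e3 e4
    have na : (l : ℕ) ≠ a := fun hh => e1 (Fin.ext hh)
    have nb : (l : ℕ) ≠ b := fun hh => e2 (Fin.ext hh)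
    have nc : (l : ℕ) ≠ cc := fun hh => e3 (Fin.ext hh)
    have nen : (l : ℕ) ≠ n - 1 := fun hh => e4 (Fin.ext hh)
    rw [ite_mk_lt han l, ite_mk_lt hbn l, ite_mk_lt hccn l, ite_mk_last hnn l, add_zero]
    by_cases hS : (l : ℕ) = i ∨ (l : ℕ) = i + 1 ∨ (l : ℕ) = j ∨ (l : ℕ) = j + 1
    · by_cases hS' : (l : ℕ) = i' ∨ (l : ℕ) = i' + 1 ∨ (l : ℕ) = j' ∨ (l : ℕ) = j' + 1
      · exfalso
        rcases hshared (l : ℕ) hS hS' with hh | hh | hh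
        · exact na hh
        · exact nb hh
        · exact nc hh
      · have hpar := hP (l : ℕ) hS hS' na nb nc
        rw [helperSign _ e hpar, one_mul]
        exact (hwpos l hS hS').le
    · by_cases hS' : (l : ℕ) = i' ∨ (l : ℕ) = i' + 1 ∨ (l : ℕ) = j' ∨ (l : ℕ) = j' + 1
      · have hpar := hN (l : ℕ) hS' hS na nb nc
        rw [helperSign' _ e hpar]
        have := hwneg l hS' hS
        linarith
      · rw [hwzero l hS hS' nen, mul_zero]
  · intro hh
    exact hl0a (by simpa using congrArg Fin.val hh)
  · intro hh
    exact hl0b (by simpa using congrArg Fin.val hh)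
  · intro hh
    exact hl0c (by simpa using congrArg Fin.val hh)
  · intro hh
    have h2 : l0 = n - 1 := by simpa using congrArg Fin.val hh
    rcases hl0pure with ⟨hh1, _⟩ | ⟨hh1, _⟩ <;> omega
  · rcases hl0pure with ⟨hh1, hh2⟩ | ⟨hh1, hh2⟩
    · exact (hwpos ⟨l0, hl0n⟩ hh1 hh2).ne'
    · exact (hwneg ⟨l0, hl0n⟩ hh1 hh2).ne

/-- Proposition 8.2: disjointness of the images of the `(1,n)`-BCFW cells in the
`m = 4` amplituhedron. If `v, v'` have the `(1,n)`-BCFW shape and `Zv`, `Zv'` span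
the same line in `ℝ^5`, then `v` and `v'` span the same line in `ℝ^n`. -/
theorem k1_bcfw_disjointness (n : ℕ) (hn : 5 ≤ n)
    (Z : Matrix (Fin 5) (Fin n) ℝ) (hZ : MinorsPos Z)
    (v v' : Fin n → ℝ) (i j i' j' : ℕ)
    (hv : K1BCFWShape n i j v) (hv' : K1BCFWShape n i' j' v')
    (h : Submodule.span ℝ {Z.mulVec v} = Submodule.span ℝ {Z.mulVec v'}) :
    Submodule.span ℝ {v} = Submodule.span ℝ {v'} := by
  classical
  obtain ⟨hij, hjn, hvpos, hvzero⟩ := hv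
  obtain ⟨hij', hjn', hvpos', hvzero'⟩ := hv'
  have hnn : n - 1 < n := by omega
  have hen4 : 4 ≤ ((⟨n - 1, hnn⟩ : Fin n) : ℕ) := by
    show 4 ≤ n - 1
    omega
  have hvnn : ∀ l : Fin n, 0 ≤ v l := by
    intro l
    by_cases hl : (l : ℕ) = i ∨ (l : ℕ) = i + 1 ∨ (l : ℕ) = j ∨ (l : ℕ) = j + 1 ∨
        (l : ℕ) = n - 1
    · exact (hvpos l hl).le
    · push_neg at hl
      rw [hvzero l hl.1 hl.2.1 hl.2.2.1 hl.2.2.2.1 hl.2.2.2.2]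
  have hvnn' : ∀ l : Fin n, 0 ≤ v' l := by
    intro l
    by_cases hl : (l : ℕ) = i' ∨ (l : ℕ) = i' + 1 ∨ (l : ℕ) = j' ∨ (l : ℕ) = j' + 1 ∨
        (l : ℕ) = n - 1
    · exact (hvpos' l hl).le
    · push_neg at hl
      rw [hvzero' l hl.1 hl.2.1 hl.2.2.1 hl.2.2.2.1 hl.2.2.2.2]
  have hven : 0 < v ⟨n - 1, hnn⟩ :=
    hvpos _ (Or.inr (Or.inr (Or.inr (Or.inr rfl))))
  have hven' : 0 < v' ⟨n - 1, hnn⟩ :=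
    hvpos' _ (Or.inr (Or.inr (Or.inr (Or.inr rfl))))
  have hZv : Z.mulVec v ≠ 0 := by
    intro h0
    exact killNonneg hn Z hZ v h0 (fun l _ => hvnn l) ⟨n - 1, hnn⟩ hen4 (ne_of_gt hven)
  have hmem : Z.mulVec v' ∈ Submodule.span ℝ {Z.mulVec v} := by
    rw [h]
    exact Submodule.mem_span_singleton_self _
  obtain ⟨c, hc⟩ := Submodule.mem_span_singleton.1 hmem
  have hker : Z.mulVec (c • v - v') = 0 := by
    rw [Matrix.mulVec_sub, Matrix.mulVec_smul, hc, sub_self]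
  have hc0 : 0 < c := by
    by_contra hle
    push_neg at hle
    refine killNonneg hn Z hZ (v' - c • v) ?_ ?_ ⟨n - 1, hnn⟩ hen4 ?_
    · rw [Matrix.mulVec_sub, Matrix.mulVec_smul, ← hc, sub_self]
    · intro l _
      have h1 := hvnn l
      have h2 := hvnn' l
      simp only [Pi.sub_apply, Pi.smul_apply, smul_eq_mul]
      nlinarith
    · simp only [Pi.sub_apply, Pi.smul_apply, smul_eq_mul]
      have h1 : c * v ⟨n - 1, hnn⟩ ≤ 0 := mul_nonpos_of_nonpos_of_nonneg hle hven.le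
      intro hcontra
      nlinarith
  by_cases hsame : i = i' ∧ j = j'
  · obtain ⟨hii, hjj⟩ := hsame
    have hi1 : i < n := by omega
    have hi2 : i + 1 < n := by omega
    have hj1 : j < n := by omega
    have hj2 : j + 1 < n := by omega
    have hw0 : c • v - v' = 0 := by
      refine killC Z hZ _ hker ⟨i, hi1⟩ ⟨i + 1, hi2⟩ ⟨j, hj1⟩ ⟨j + 1, hj2⟩ ⟨n - 1, hnn⟩
        (Fin.mk_lt_mk.2 (by omega)) (Fin.mk_lt_mk.2 (by omega)) (Fin.mk_lt_mk.2 (by omega))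
        (Fin.mk_lt_mk.2 (by omega)) ?_
      intro l e1 e2 e3 e4 e5
      have n1 : (l : ℕ) ≠ i := fun hh => e1 (Fin.ext hh)
      have n2 : (l : ℕ) ≠ i + 1 := fun hh => e2 (Fin.ext hh)
      have n3 : (l : ℕ) ≠ j := fun hh => e3 (Fin.ext hh)
      have n4 : (l : ℕ) ≠ j + 1 := fun hh => e4 (Fin.ext hh)
      have n5 : (l : ℕ) ≠ n - 1 := fun hh => e5 (Fin.ext hh)
      simp only [Pi.sub_apply, Pi.smul_apply, smul_eq_mul,
        hvzero l n1 n2 n3 n4 n5, hvzero' l (hii ▸ n1) (hii ▸ n2) (hjj ▸ n3) (hjj ▸ n4) n5,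
        mul_zero, sub_zero]
    have hv'eq : v' = c • v := (sub_eq_zero.1 hw0).symm
    rw [hv'eq]
    exact (Submodule.span_singleton_smul_eq (isUnit_iff_ne_zero.2 (ne_of_gt hc0)) v).symm
  · exfalso
    refine killB hn Z hZ i j i' j' hij hjn hij' hjn' hsame (c • v - v') hker ?_ ?_ ?_
    · intro l hS hS'
      have nen : (l : ℕ) ≠ n - 1 := by omega
      push_neg at hS'
      have hv'0 : v' l = 0 := hvzero' l hS'.1 hS'.2.1 hS'.2.2.1 hS'.2.2.2 nen
      have hvp : 0 < v l := hvpos l (by tauto)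
      simp only [Pi.sub_apply, Pi.smul_apply, smul_eq_mul, hv'0, sub_zero]
      positivity
    · intro l hS' hS
      have nen : (l : ℕ) ≠ n - 1 := by omega
      push_neg at hS
      have hv0 : v l = 0 := hvzero l hS.1 hS.2.1 hS.2.2.1 hS.2.2.2 nen
      have hvp : 0 < v' l := hvpos' l (by tauto)
      simp only [Pi.sub_apply, Pi.smul_apply, smul_eq_mul, hv0, mul_zero, zero_sub]
      linarith
    · intro l hS hS' nen
      push_neg at hS
      push_neg at hS'
      simp only [Pi.sub_apply, Pi.smul_apply, smul_eq_mul,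
        hvzero l hS.1 hS.2.1 hS.2.2.1 hS.2.2.2 nen,
        hvzero' l hS'.1 hS'.2.1 hS'.2.2.1 hS'.2.2.2 nen, mul_zero, sub_zero]
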